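/- Let α be a nonzero integer and let (h_n) be the sequence determined by h_0 = 0, h_1 = 1, h_2 = -α, h_3 = -α^3, h_4 = α^6, h_5 = 0 and the EDS recurrence. Then for all n, h_n = ε·α^{(2n^2-p)/5}, where ε = +1 if n ≡ 1,4,7,8 (mod 10), ε = -1 if n ≡ 2,3,6,9 (mod 10), ε = 0 if n ≡ 0 (mod 5), and p = 2 if n ≡ 1,4 (mod 5), p = 3 if n ≡ 2,3 (mod 5). -/

import Mathlib

private def S5 : ℕ → ℤ
  | 0 => 0 | 1 => 1 | 2 => -1 | 3 => -1 | 4 => 1 | 5 => 0 | 6 => -1 | 7 => 1 | 8 => 1 | _ => -1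

private def C5 : ℕ → ℕ
  | 0 => 0 | 1 => 0 | 2 => 1 | 3 => 3 | 4 => 6 | 5 => 9 | 6 => 14 | 7 => 19 | 8 => 25 | _ => 32

private def Fd (α : ℤ) (n : ℕ) : ℤ :=
  (if n % 10 = 1 ∨ n % 10 = 4 ∨ n % 10 = 7 ∨ n % 10 = 8 then (1 : ℤ)
   else if n % 10 = 2 ∨ n % 10 = 3 ∨ n % 10 = 6 ∨ n % 10 = 9 then -1 else 0) *
  α ^ ((2 * n ^ 2 - (if n % 5 = 2 ∨ n % 5 = 3 then 3 else 2)) / 5)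

private lemma Fd_nice (α : ℤ) (q r : ℕ) (hr : r < 10) :
    Fd α (10 * q + r) = S5 r * α ^ (40 * q^2 + 8 * q * r + C5 r) := by
  interval_cases r

  · simp only [Fd, show (10*q+0) % 10 = 0 from by omega, show (10*q+0) % 5 = 0 from by omega]
    norm_num [S5, C5]

  · have hsq : (10*q+1)^2 = 100*q^2+20*1*q+1 := by ring
    have e : (2*(10*q+1)^2 - 2)/5 = 40*q^2+8*q*1+0 := by omega
    simp only [Fd, show (10*q+1) % 10 = 1 from by omega, show (10*q+1) % 5 = 1 from by omega]
    norm_num [S5, C5, e]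

  · have hsq : (10*q+2)^2 = 100*q^2+20*2*q+4 := by ring
    have e : (2*(10*q+2)^2 - 3)/5 = 40*q^2+8*q*2+1 := by omega
    simp only [Fd, show (10*q+2) % 10 = 2 from by omega, show (10*q+2) % 5 = 2 from by omega]
    norm_num [S5, C5, e]

  · have hsq : (10*q+3)^2 = 100*q^2+20*3*q+9 := by ring
    have e : (2*(10*q+3)^2 - 3)/5 = 40*q^2+8*q*3+3 := by omega
    simp only [Fd, show (10*q+3) % 10 = 3 from by omega, show (10*q+3) % 5 = 3 from by omega]
    norm_num [S5, C5, e]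

  · have hsq : (10*q+4)^2 = 100*q^2+20*4*q+16 := by ring
    have e : (2*(10*q+4)^2 - 2)/5 = 40*q^2+8*q*4+6 := by omega
    simp only [Fd, show (10*q+4) % 10 = 4 from by omega, show (10*q+4) % 5 = 4 from by omega]
    norm_num [S5, C5, e]

  · simp only [Fd, show (10*q+5) % 10 = 5 from by omega, show (10*q+5) % 5 = 0 from by omega]
    norm_num [S5, C5]

  · have hsq : (10*q+6)^2 = 100*q^2+20*6*q+36 := by ring
    have e : (2*(10*q+6)^2 - 2)/5 = 40*q^2+8*q*6+14 := by omega
    simp only [Fd, show (10*q+6) % 10 = 6 from by omega, show (10*q+6) % 5 = 1 from by omega]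
    norm_num [S5, C5, e]

  · have hsq : (10*q+7)^2 = 100*q^2+20*7*q+49 := by ring
    have e : (2*(10*q+7)^2 - 3)/5 = 40*q^2+8*q*7+19 := by omega
    simp only [Fd, show (10*q+7) % 10 = 7 from by omega, show (10*q+7) % 5 = 2 from by omega]
    norm_num [S5, C5, e]

  · have hsq : (10*q+8)^2 = 100*q^2+20*8*q+64 := by ring
    have e : (2*(10*q+8)^2 - 3)/5 = 40*q^2+8*q*8+25 := by omega
    simp only [Fd, show (10*q+8) % 10 = 8 from by omega, show (10*q+8) % 5 = 3 from by omega]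
    norm_num [S5, C5, e]

  · have hsq : (10*q+9)^2 = 100*q^2+20*9*q+81 := by ring
    have e : (2*(10*q+9)^2 - 2)/5 = 40*q^2+8*q*9+32 := by omega
    simp only [Fd, show (10*q+9) % 10 = 9 from by omega, show (10*q+9) % 5 = 4 from by omega]
    norm_num [S5, C5, e]


private lemma Fd_odd (α : ℤ) (j : ℕ) :
    Fd α (2*j+3) = Fd α (j+3) * Fd α (j+1)^3 - Fd α j * Fd α (j+2)^3 := by
  obtain ⟨q, r, hr, rfl⟩ : ∃ q r, r < 10 ∧ j = 10*q+r := ⟨j/10, j%10, by omega, by omega⟩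
  interval_cases r

  · simp only [show 10*q+0 = 10*q from by omega,
      show 2*(10*q)+3 = 10*(2*q)+3 from by omega,
      show 10*q+1 = 10*(q)+1 from by omega,
      show 10*q+2 = 10*(q)+2 from by omega,
      show 10*q+3 = 10*(q)+3 from by omega]
    rw [Fd_nice α (2*q) 3 (by norm_num), (show Fd α (10*q) = S5 0 * α ^ (40*(q)^2+8*(q)*0+C5 0) from Fd_nice α (q) 0 (by norm_num)), Fd_nice α (q) 1 (by norm_num), Fd_nice α (q) 2 (by norm_num), Fd_nice α (q) 3 (by norm_num)]
    norm_num [S5, C5]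
    try ring

  · simp only [show 2*(10*q+1)+3 = 10*(2*q)+5 from by omega,
      show 10*q+1 = 10*(q)+1 from by omega,
      show 10*q+1+1 = 10*(q)+2 from by omega,
      show 10*q+1+2 = 10*(q)+3 from by omega,
      show 10*q+1+3 = 10*(q)+4 from by omega]
    rw [Fd_nice α (2*q) 5 (by norm_num), Fd_nice α (q) 1 (by norm_num), Fd_nice α (q) 2 (by norm_num), Fd_nice α (q) 3 (by norm_num), Fd_nice α (q) 4 (by norm_num)]
    norm_num [S5, C5]
    try ring

  · simp only [show 2*(10*q+2)+3 = 10*(2*q)+7 from by omega,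
      show 10*q+2 = 10*(q)+2 from by omega,
      show 10*q+2+1 = 10*(q)+3 from by omega,
      show 10*q+2+2 = 10*(q)+4 from by omega,
      show 10*q+2+3 = 10*(q)+5 from by omega]
    rw [Fd_nice α (2*q) 7 (by norm_num), Fd_nice α (q) 2 (by norm_num), Fd_nice α (q) 3 (by norm_num), Fd_nice α (q) 4 (by norm_num), Fd_nice α (q) 5 (by norm_num)]
    norm_num [S5, C5]
    try ring

  · simp only [show 2*(10*q+3)+3 = 10*(2*q)+9 from by omega,
      show 10*q+3 = 10*(q)+3 from by omega,
      show 10*q+3+1 = 10*(q)+4 from by omega,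
      show 10*q+3+2 = 10*(q)+5 from by omega,
      show 10*q+3+3 = 10*(q)+6 from by omega]
    rw [Fd_nice α (2*q) 9 (by norm_num), Fd_nice α (q) 3 (by norm_num), Fd_nice α (q) 4 (by norm_num), Fd_nice α (q) 5 (by norm_num), Fd_nice α (q) 6 (by norm_num)]
    norm_num [S5, C5]
    try ring

  · simp only [show 2*(10*q+4)+3 = 10*(2*q+1)+1 from by omega,
      show 10*q+4 = 10*(q)+4 from by omega,
      show 10*q+4+1 = 10*(q)+5 from by omega,
      show 10*q+4+2 = 10*(q)+6 from by omega,
      show 10*q+4+3 = 10*(q)+7 from by omega]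
    rw [Fd_nice α (2*q+1) 1 (by norm_num), Fd_nice α (q) 4 (by norm_num), Fd_nice α (q) 5 (by norm_num), Fd_nice α (q) 6 (by norm_num), Fd_nice α (q) 7 (by norm_num)]
    norm_num [S5, C5]
    try ring

  · simp only [show 2*(10*q+5)+3 = 10*(2*q+1)+3 from by omega,
      show 10*q+5 = 10*(q)+5 from by omega,
      show 10*q+5+1 = 10*(q)+6 from by omega,
      show 10*q+5+2 = 10*(q)+7 from by omega,
      show 10*q+5+3 = 10*(q)+8 from by omega]
    rw [Fd_nice α (2*q+1) 3 (by norm_num), Fd_nice α (q) 5 (by norm_num), Fd_nice α (q) 6 (by norm_num), Fd_nice α (q) 7 (by norm_num), Fd_nice α (q) 8 (by norm_num)]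
    norm_num [S5, C5]
    try ring

  · simp only [show 2*(10*q+6)+3 = 10*(2*q+1)+5 from by omega,
      show 10*q+6 = 10*(q)+6 from by omega,
      show 10*q+6+1 = 10*(q)+7 from by omega,
      show 10*q+6+2 = 10*(q)+8 from by omega,
      show 10*q+6+3 = 10*(q)+9 from by omega]
    rw [Fd_nice α (2*q+1) 5 (by norm_num), Fd_nice α (q) 6 (by norm_num), Fd_nice α (q) 7 (by norm_num), Fd_nice α (q) 8 (by norm_num), Fd_nice α (q) 9 (by norm_num)]
    norm_num [S5, C5]
    try ring

  · simp only [show 2*(10*q+7)+3 = 10*(2*q+1)+7 from by omega,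
      show 10*q+7 = 10*(q)+7 from by omega,
      show 10*q+7+1 = 10*(q)+8 from by omega,
      show 10*q+7+2 = 10*(q)+9 from by omega,
      show 10*q+7+3 = 10*(q+1) from by omega]
    rw [Fd_nice α (2*q+1) 7 (by norm_num), Fd_nice α (q) 7 (by norm_num), Fd_nice α (q) 8 (by norm_num), Fd_nice α (q) 9 (by norm_num), (show Fd α (10*(q+1)) = S5 0 * α ^ (40*(q+1)^2+8*(q+1)*0+C5 0) from Fd_nice α (q+1) 0 (by norm_num))]
    norm_num [S5, C5]
    try ring

  · simp only [show 2*(10*q+8)+3 = 10*(2*q+1)+9 from by omega,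
      show 10*q+8 = 10*(q)+8 from by omega,
      show 10*q+8+1 = 10*(q)+9 from by omega,
      show 10*q+8+2 = 10*(q+1) from by omega,
      show 10*q+8+3 = 10*(q+1)+1 from by omega]
    rw [Fd_nice α (2*q+1) 9 (by norm_num), Fd_nice α (q) 8 (by norm_num), Fd_nice α (q) 9 (by norm_num), (show Fd α (10*(q+1)) = S5 0 * α ^ (40*(q+1)^2+8*(q+1)*0+C5 0) from Fd_nice α (q+1) 0 (by norm_num)), Fd_nice α (q+1) 1 (by norm_num)]
    norm_num [S5, C5]
    try ring

  · simp only [show 2*(10*q+9)+3 = 10*(2*q+2)+1 from by omega,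
      show 10*q+9 = 10*(q)+9 from by omega,
      show 10*q+9+1 = 10*(q+1) from by omega,
      show 10*q+9+2 = 10*(q+1)+1 from by omega,
      show 10*q+9+3 = 10*(q+1)+2 from by omega]
    rw [Fd_nice α (2*q+2) 1 (by norm_num), Fd_nice α (q) 9 (by norm_num), (show Fd α (10*(q+1)) = S5 0 * α ^ (40*(q+1)^2+8*(q+1)*0+C5 0) from Fd_nice α (q+1) 0 (by norm_num)), Fd_nice α (q+1) 1 (by norm_num), Fd_nice α (q+1) 2 (by norm_num)]
    norm_num [S5, C5]
    try ring


private lemma Fd_even (α : ℤ) (j : ℕ) :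
    Fd α (2*j+4) * (-α) =
      Fd α (j+4) * Fd α (j+2) * Fd α (j+1)^2 - Fd α (j+2) * Fd α j * Fd α (j+3)^2 := by
  obtain ⟨q, r, hr, rfl⟩ : ∃ q r, r < 10 ∧ j = 10*q+r := ⟨j/10, j%10, by omega, by omega⟩
  interval_cases r

  · simp only [show 10*q+0 = 10*q from by omega,
      show 2*(10*q)+4 = 10*(2*q)+4 from by omega,
      show 10*q+1 = 10*(q)+1 from by omega,
      show 10*q+2 = 10*(q)+2 from by omega,
      show 10*q+3 = 10*(q)+3 from by omega,
      show 10*q+4 = 10*(q)+4 from by omega]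
    rw [Fd_nice α (2*q) 4 (by norm_num), (show Fd α (10*q) = S5 0 * α ^ (40*(q)^2+8*(q)*0+C5 0) from Fd_nice α (q) 0 (by norm_num)), Fd_nice α (q) 1 (by norm_num), Fd_nice α (q) 2 (by norm_num), Fd_nice α (q) 3 (by norm_num), Fd_nice α (q) 4 (by norm_num)]
    norm_num [S5, C5]
    try ring

  · simp only [show 2*(10*q+1)+4 = 10*(2*q)+6 from by omega,
      show 10*q+1 = 10*(q)+1 from by omega,
      show 10*q+1+1 = 10*(q)+2 from by omega,
      show 10*q+1+2 = 10*(q)+3 from by omega,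
      show 10*q+1+3 = 10*(q)+4 from by omega,
      show 10*q+1+4 = 10*(q)+5 from by omega]
    rw [Fd_nice α (2*q) 6 (by norm_num), Fd_nice α (q) 1 (by norm_num), Fd_nice α (q) 2 (by norm_num), Fd_nice α (q) 3 (by norm_num), Fd_nice α (q) 4 (by norm_num), Fd_nice α (q) 5 (by norm_num)]
    norm_num [S5, C5]
    try ring

  · simp only [show 2*(10*q+2)+4 = 10*(2*q)+8 from by omega,
      show 10*q+2 = 10*(q)+2 from by omega,
      show 10*q+2+1 = 10*(q)+3 from by omega,
      show 10*q+2+2 = 10*(q)+4 from by omega,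
      show 10*q+2+3 = 10*(q)+5 from by omega,
      show 10*q+2+4 = 10*(q)+6 from by omega]
    rw [Fd_nice α (2*q) 8 (by norm_num), Fd_nice α (q) 2 (by norm_num), Fd_nice α (q) 3 (by norm_num), Fd_nice α (q) 4 (by norm_num), Fd_nice α (q) 5 (by norm_num), Fd_nice α (q) 6 (by norm_num)]
    norm_num [S5, C5]
    try ring

  · simp only [show 2*(10*q+3)+4 = 10*(2*q+1) from by omega,
      show 10*q+3 = 10*(q)+3 from by omega,
      show 10*q+3+1 = 10*(q)+4 from by omega,
      show 10*q+3+2 = 10*(q)+5 from by omega,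
      show 10*q+3+3 = 10*(q)+6 from by omega,
      show 10*q+3+4 = 10*(q)+7 from by omega]
    rw [(show Fd α (10*(2*q+1)) = S5 0 * α ^ (40*(2*q+1)^2+8*(2*q+1)*0+C5 0) from Fd_nice α (2*q+1) 0 (by norm_num)), Fd_nice α (q) 3 (by norm_num), Fd_nice α (q) 4 (by norm_num), Fd_nice α (q) 5 (by norm_num), Fd_nice α (q) 6 (by norm_num), Fd_nice α (q) 7 (by norm_num)]
    norm_num [S5, C5]
    try ring

  · simp only [show 2*(10*q+4)+4 = 10*(2*q+1)+2 from by omega,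
      show 10*q+4 = 10*(q)+4 from by omega,
      show 10*q+4+1 = 10*(q)+5 from by omega,
      show 10*q+4+2 = 10*(q)+6 from by omega,
      show 10*q+4+3 = 10*(q)+7 from by omega,
      show 10*q+4+4 = 10*(q)+8 from by omega]
    rw [Fd_nice α (2*q+1) 2 (by norm_num), Fd_nice α (q) 4 (by norm_num), Fd_nice α (q) 5 (by norm_num), Fd_nice α (q) 6 (by norm_num), Fd_nice α (q) 7 (by norm_num), Fd_nice α (q) 8 (by norm_num)]
    norm_num [S5, C5]
    try ring

  · simp only [show 2*(10*q+5)+4 = 10*(2*q+1)+4 from by omega,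
      show 10*q+5 = 10*(q)+5 from by omega,
      show 10*q+5+1 = 10*(q)+6 from by omega,
      show 10*q+5+2 = 10*(q)+7 from by omega,
      show 10*q+5+3 = 10*(q)+8 from by omega,
      show 10*q+5+4 = 10*(q)+9 from by omega]
    rw [Fd_nice α (2*q+1) 4 (by norm_num), Fd_nice α (q) 5 (by norm_num), Fd_nice α (q) 6 (by norm_num), Fd_nice α (q) 7 (by norm_num), Fd_nice α (q) 8 (by norm_num), Fd_nice α (q) 9 (by norm_num)]
    norm_num [S5, C5]
    try ring

  · simp only [show 2*(10*q+6)+4 = 10*(2*q+1)+6 from by omega,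
      show 10*q+6 = 10*(q)+6 from by omega,
      show 10*q+6+1 = 10*(q)+7 from by omega,
      show 10*q+6+2 = 10*(q)+8 from by omega,
      show 10*q+6+3 = 10*(q)+9 from by omega,
      show 10*q+6+4 = 10*(q+1) from by omega]
    rw [Fd_nice α (2*q+1) 6 (by norm_num), Fd_nice α (q) 6 (by norm_num), Fd_nice α (q) 7 (by norm_num), Fd_nice α (q) 8 (by norm_num), Fd_nice α (q) 9 (by norm_num), (show Fd α (10*(q+1)) = S5 0 * α ^ (40*(q+1)^2+8*(q+1)*0+C5 0) from Fd_nice α (q+1) 0 (by norm_num))]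
    norm_num [S5, C5]
    try ring

  · simp only [show 2*(10*q+7)+4 = 10*(2*q+1)+8 from by omega,
      show 10*q+7 = 10*(q)+7 from by omega,
      show 10*q+7+1 = 10*(q)+8 from by omega,
      show 10*q+7+2 = 10*(q)+9 from by omega,
      show 10*q+7+3 = 10*(q+1) from by omega,
      show 10*q+7+4 = 10*(q+1)+1 from by omega]
    rw [Fd_nice α (2*q+1) 8 (by norm_num), Fd_nice α (q) 7 (by norm_num), Fd_nice α (q) 8 (by norm_num), Fd_nice α (q) 9 (by norm_num), (show Fd α (10*(q+1)) = S5 0 * α ^ (40*(q+1)^2+8*(q+1)*0+C5 0) from Fd_nice α (q+1) 0 (by norm_num)), Fd_nice α (q+1) 1 (by norm_num)]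
    norm_num [S5, C5]
    try ring

  · simp only [show 2*(10*q+8)+4 = 10*(2*q+2) from by omega,
      show 10*q+8 = 10*(q)+8 from by omega,
      show 10*q+8+1 = 10*(q)+9 from by omega,
      show 10*q+8+2 = 10*(q+1) from by omega,
      show 10*q+8+3 = 10*(q+1)+1 from by omega,
      show 10*q+8+4 = 10*(q+1)+2 from by omega]
    rw [(show Fd α (10*(2*q+2)) = S5 0 * α ^ (40*(2*q+2)^2+8*(2*q+2)*0+C5 0) from Fd_nice α (2*q+2) 0 (by norm_num)), Fd_nice α (q) 8 (by norm_num), Fd_nice α (q) 9 (by norm_num), (show Fd α (10*(q+1)) = S5 0 * α ^ (40*(q+1)^2+8*(q+1)*0+C5 0) from Fd_nice α (q+1) 0 (by norm_num)), Fd_nice α (q+1) 1 (by norm_num), Fd_nice α (q+1) 2 (by norm_num)]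
    norm_num [S5, C5]
    try ring

  · simp only [show 2*(10*q+9)+4 = 10*(2*q+2)+2 from by omega,
      show 10*q+9 = 10*(q)+9 from by omega,
      show 10*q+9+1 = 10*(q+1) from by omega,
      show 10*q+9+2 = 10*(q+1)+1 from by omega,
      show 10*q+9+3 = 10*(q+1)+2 from by omega,
      show 10*q+9+4 = 10*(q+1)+3 from by omega]
    rw [Fd_nice α (2*q+2) 2 (by norm_num), Fd_nice α (q) 9 (by norm_num), (show Fd α (10*(q+1)) = S5 0 * α ^ (40*(q+1)^2+8*(q+1)*0+C5 0) from Fd_nice α (q+1) 0 (by norm_num)), Fd_nice α (q+1) 1 (by norm_num), Fd_nice α (q+1) 2 (by norm_num), Fd_nice α (q+1) 3 (by norm_num)]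
    norm_num [S5, C5]
    try ring


theorem eds_rank5_general_term (α : ℤ) (hα : α ≠ 0) (h : ℕ → ℤ)
    (hrec : ∀ m n : ℕ, 1 ≤ n → n ≤ m →
      h (m + n) * h (m - n) = h (m + 1) * h (m - 1) * h n ^ 2 - h (n + 1) * h (n - 1) * h m ^ 2)
    (h0 : h 0 = 0) (h1 : h 1 = 1) (h2 : h 2 = -α) (h3 : h 3 = -α ^ 3)
    (h4 : h 4 = α ^ 6) (h5 : h 5 = 0) :
    ∀ n : ℕ, h n =
      (if n % 10 = 1 ∨ n % 10 = 4 ∨ n % 10 = 7 ∨ n % 10 = 8 then (1 : ℤ)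
       else if n % 10 = 2 ∨ n % 10 = 3 ∨ n % 10 = 6 ∨ n % 10 = 9 then -1 else 0) *
      α ^ ((2 * n ^ 2 - (if n % 5 = 2 ∨ n % 5 = 3 then 3 else 2)) / 5) := by
  have key : ∀ n, h n = Fd α n := by
    intro n
    induction n using Nat.strong_induction_on with
    | _ n ih =>
      rcases lt_or_ge n 6 with h6 | h6
      · interval_cases n
        · norm_num [Fd, h0]
        · norm_num [Fd, h1]
        · norm_num [Fd, h2]
        · norm_num [Fd, h3]
        · norm_num [Fd, h4]
        · norm_num [Fd, h5]
      · obtain ⟨j, hj⟩ : ∃ j, n = 2*j+3 ∨ n = 2*j+4 := ⟨(n-3)/2, by omega⟩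
        rcases hj with rfl | rfl
        · have hrc := hrec (j+2) (j+1) (by omega) (by omega)
          rw [show j+2+(j+1) = 2*j+3 from by omega, show j+2-(j+1) = 1 from by omega,
            h1, mul_one, show j+2+1 = j+3 from by omega, show j+2-1 = j+1 from by omega,
            show j+1+1 = j+2 from by omega, show j+1-1 = j from by omega] at hrc
          rw [hrc, ih (j+3) (by omega), ih (j+1) (by omega), ih j (by omega),
            ih (j+2) (by omega), Fd_odd α j]
          ring
        · have hrc := hrec (j+3) (j+1) (by omega) (by omega)
          rw [show j+3+(j+1) = 2*j+4 from by omega, show j+3-(j+1) = 2 from by omega,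
            h2, show j+3+1 = j+4 from by omega, show j+3-1 = j+2 from by omega,
            show j+1+1 = j+2 from by omega, show j+1-1 = j from by omega] at hrc
          apply mul_right_cancel₀ (neg_ne_zero.mpr hα)
          rw [hrc]
          rw [ih (j+4) (by omega)]
          rw [ih (j+2) (by omega)]
          rw [ih (j+1) (by omega)]
          rw [ih j (by omega)]
          rw [ih (j+3) (by omega)]
          rw [Fd_even α j]
  intro n
  have := key n
  rwa [Fd] at this
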